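/- Let τ := Δ + q_δ, where q_δ is the absolute value of the δ-quantile of Lap(Δ/ε). Then the PositiveLaplaceMechanism with parameters ε, τ and sensitivity Δ is (ε, δ)-differentially private with respect to the neighboring relation |v − v'| ≤ Δ on real inputs. -/

import Mathlib

open MeasureTheory Real Set

lemma integrableOn_exp_div_Iic (b : ℝ) (hb : 0 < b) (c : ℝ) :
    IntegrableOn (fun x => Real.exp (x / b)) (Set.Iic c) := by
  refine integrableOn_Iic_of_intervalIntegral_norm_bounded (b * Real.exp (c / b)) c
    (fun i => (Real.continuous_exp.comp (continuous_id.div_const b)).integrableOn_Ioc)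
    Filter.tendsto_id ?_
  filter_upwards with a
  have h1 : ∀ x : ℝ, ‖Real.exp (x / b)‖ = Real.exp (x / b) := fun x =>
    Real.norm_of_nonneg (Real.exp_pos _).le
  simp only [h1]
  rw [intervalIntegral.integral_comp_div (f := Real.exp) hb.ne']
  rw [integral_exp]
  simp only [smul_eq_mul]
  simp only [smul_eq_mul, id]
  nlinarith [Real.exp_pos (a / b), Real.exp_pos (c / b)]

lemma integral_exp_div_Iic (b : ℝ) (hb : 0 < b) (c : ℝ) :
    ∫ x in Set.Iic c, Real.exp (x / b) = b * Real.exp (c / b) := by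
  have := integral_Iic_of_hasDerivAt_of_tendsto' (a := c)
    (f := fun x => b * Real.exp (x / b)) (f' := fun x => Real.exp (x / b))
    (fun x _ => by
      have h := (((hasDerivAt_id x).div_const b).exp.const_mul b)
      exact h.congr_deriv (by simp only [id]; field_simp))
    (integrableOn_exp_div_Iic b hb c)
    (by
      have : Filter.Tendsto (fun x : ℝ => Real.exp (x / b)) Filter.atBot (nhds 0) :=
        Real.tendsto_exp_atBot.comp (Filter.tendsto_id.atBot_div_const hb)
      simpa using this.const_mul b)
  simpa using this


/-- The Laplace distribution on ℝ with location 0 and scale `b`. -/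
noncomputable def laplace (b : ℝ) : Measure ℝ :=
  volume.withDensity fun x => ENNReal.ofReal ((2 * b)⁻¹ * Real.exp (-|x| / b))

lemma laplace_tail (b δ : ℝ) (hb : 0 < b) (hδ : 0 < δ) (hδ2 : δ < 1/2) :
    laplace b (Set.Iic (-(b * Real.log (1 / (2 * δ))))) = ENNReal.ofReal δ := by
  set q := b * Real.log (1 / (2 * δ)) with hqdef
  have h2δ : 0 < 2 * δ := by linarith
  have hlog : 0 ≤ Real.log (1 / (2 * δ)) :=
    Real.log_nonneg (by rw [le_div_iff₀ h2δ]; linarith)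
  have hq : 0 ≤ q := mul_nonneg hb.le hlog
  rw [laplace, withDensity_apply _ measurableSet_Iic]
  have hcongr : ∀ x ∈ Set.Iic (-q),
      ENNReal.ofReal ((2 * b)⁻¹ * Real.exp (-|x| / b))
        = ENNReal.ofReal ((2 * b)⁻¹ * Real.exp (x / b)) := by
    intro x hx
    have hx0 : x ≤ 0 := le_trans hx (by linarith)
    rw [abs_of_nonpos hx0, neg_neg]
  rw [setLIntegral_congr_fun measurableSet_Iic hcongr]
  rw [← ofReal_integral_eq_lintegral_ofReal
    ((integrableOn_exp_div_Iic b hb (-q)).const_mul _)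
    (ae_of_all _ fun x => mul_nonneg (by positivity) (Real.exp_pos _).le)]
  congr 1
  rw [integral_const_mul, integral_exp_div_Iic b hb]
  have hexp : Real.exp (-q / b) = 2 * δ := by
    rw [hqdef]
    rw [show -(b * Real.log (1 / (2 * δ))) / b = -Real.log (1 / (2 * δ)) by
      field_simp]
    rw [Real.exp_neg, Real.exp_log (by positivity), one_div, inv_inv]
  rw [hexp]
  field_simp

lemma laplace_shift (b t : ℝ) (hb : 0 < b) (A : Set ℝ) (hA : MeasurableSet A) :
    laplace b A ≤ ENNReal.ofReal (Real.exp (|t| / b)) * laplace b ((fun x => x - t) ⁻¹' A) := by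
  have hA' : MeasurableSet ((fun x => x - t) ⁻¹' A) := (measurable_sub_const t) hA
  have hmeas : Measurable fun x : ℝ => ENNReal.ofReal ((2 * b)⁻¹ * Real.exp (-|x| / b)) := by
    apply Measurable.ennreal_ofReal
    fun_prop
  rw [laplace, withDensity_apply _ hA, withDensity_apply _ hA']
  have hshift : ∫⁻ y in (fun x => x - t) ⁻¹' A,
      ENNReal.ofReal ((2 * b)⁻¹ * Real.exp (-|y| / b))
      = ∫⁻ x in A, ENNReal.ofReal ((2 * b)⁻¹ * Real.exp (-|x + t| / b)) := by
    rw [← lintegral_indicator hA', ← lintegral_indicator hA]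
    rw [← lintegral_add_right_eq_self
      (fun y => ((fun x => x - t) ⁻¹' A).indicator
        (fun x => ENNReal.ofReal ((2 * b)⁻¹ * Real.exp (-|x| / b))) y) t]
    apply lintegral_congr
    intro x
    by_cases hx : x ∈ A
    · rw [Set.indicator_of_mem hx, Set.indicator_of_mem (by simp [hx])]
    · rw [Set.indicator_of_notMem hx, Set.indicator_of_notMem (by simp [hx])]
  rw [hshift, ← lintegral_const_mul _ (by fun_prop)]
  apply setLIntegral_mono' hA
  intro x _
  rw [← ENNReal.ofReal_mul (Real.exp_pos _).le]
  apply ENNReal.ofReal_le_ofReal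
  rw [mul_left_comm, ← Real.exp_add]
  apply mul_le_mul_of_nonneg_left _ (by positivity)
  apply Real.exp_le_exp.mpr
  rw [← add_div, div_le_div_iff_of_pos_right hb]
  linarith [abs_add_le x t]


/-- On input `v`, the PositiveLaplaceMechanism samples `η ~ Lap(Δ/ε)` and outputs
`max v (v + τ + η)`; so `P(M(v) ∈ S)` is the Laplace measure of the preimage. -/
noncomputable def posLapProb (ε τ Δ : ℝ) (v : ℝ) (S : Set ℝ) : ENNReal :=
  laplace (Δ / ε) {η : ℝ | max v (v + τ + η) ∈ S}

lemma key (ε δ Δ : ℝ) (hε : 0 < ε) (hδ : δ ∈ Set.Ioo (0 : ℝ) (1 / 2)) (hΔ : 0 < Δ)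
    (τ : ℝ) (hτ : τ = Δ + (Δ / ε) * Real.log (1 / (2 * δ)))
    (v v' : ℝ) (hvv' : |v - v'| ≤ Δ) (S : Set ℝ) (hS : MeasurableSet S) :
    posLapProb ε τ Δ v S ≤
      ENNReal.ofReal (Real.exp ε) * posLapProb ε τ Δ v' S + ENNReal.ofReal δ := by
  obtain ⟨hδ0, hδ2⟩ := hδ
  set b := Δ / ε with hbdef
  have hb : 0 < b := div_pos hΔ hε
  set q := b * Real.log (1 / (2 * δ)) with hqdef
  have hq : 0 ≤ q := mul_nonneg hb.le
    (Real.log_nonneg (by rw [le_div_iff₀ (by linarith)]; linarith))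
  set t := v - v' with htdef
  have hmax : ∀ w : ℝ, Measurable fun η : ℝ => max w (w + τ + η) :=
    fun w => measurable_const.max (measurable_const.add measurable_id)
  set A : Set ℝ := {η : ℝ | max v (v + τ + η) ∈ S} with hAdef
  set A' : Set ℝ := {η : ℝ | max v' (v' + τ + η) ∈ S} with hA'def
  have hA : MeasurableSet A := hmax v hS
  have hA' : MeasurableSet A' := hmax v' hS
  set A₂ : Set ℝ := A ∩ Set.Ioi (-q) with hA2def
  have hA₂ : MeasurableSet A₂ := hA.inter measurableSet_Ioi
  -- step 1
  have step1 : laplace b A ≤ laplace b A₂ + ENNReal.ofReal δ := by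
    have hsub : A ⊆ A₂ ∪ Set.Iic (-q) := by
      intro x hx
      by_cases hxq : -q < x
      · exact Or.inl ⟨hx, hxq⟩
      · exact Or.inr (not_lt.mp hxq)
    calc laplace b A ≤ laplace b (A₂ ∪ Set.Iic (-q)) := measure_mono hsub
      _ ≤ laplace b A₂ + laplace b (Set.Iic (-q)) := measure_union_le _ _
      _ = laplace b A₂ + ENNReal.ofReal δ := by
          rw [laplace_tail b δ hb hδ0 hδ2]
  -- step 3: shifted A₂ lies inside A'
  have step3 : (fun x => x - t) ⁻¹' A₂ ⊆ A' := by
    intro y hy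
    obtain ⟨hyA, hyq⟩ := hy
    simp only [Set.mem_preimage, Set.mem_setOf_eq, Set.mem_Ioi] at hyA hyq ⊢
    have ht1 : -Δ ≤ t := neg_le_of_abs_le hvv'
    have ht2 : t ≤ Δ := le_of_abs_le hvv'
    have hyt : -q < y - t := hyq
    have h1 : v < v + τ + (y - t) := by
      have : 0 < τ + (y - t) := by rw [hτ]; linarith
      linarith
    have h2 : v' < v' + τ + y := by
      have : 0 < τ + y := by rw [hτ]; linarith
      linarith
    have hS1 : v + τ + (y - t) ∈ S := by
      have h := hyA
      rw [hAdef, Set.mem_setOf_eq, max_eq_right h1.le] at h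
      exact h
    rw [hA'def, Set.mem_setOf_eq, max_eq_right h2.le]
    have heq : v' + τ + y = v + τ + (y - t) := by rw [htdef]; ring
    rwa [heq]
  -- combine
  have step2 : laplace b A₂ ≤ ENNReal.ofReal (Real.exp ε) * laplace b A' := by
    calc laplace b A₂
        ≤ ENNReal.ofReal (Real.exp (|t| / b)) * laplace b ((fun x => x - t) ⁻¹' A₂) :=
          laplace_shift b t hb A₂ hA₂
      _ ≤ ENNReal.ofReal (Real.exp ε) * laplace b A' := by
          apply mul_le_mul'
          · apply ENNReal.ofReal_le_ofReal
            apply Real.exp_le_exp.mpr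
            rw [div_le_iff₀ hb, hbdef]
            calc |t| ≤ Δ := hvv'
              _ = ε * (Δ / ε) := by field_simp
          · exact measure_mono step3
  calc posLapProb ε τ Δ v S = laplace b A := rfl
    _ ≤ laplace b A₂ + ENNReal.ofReal δ := step1
    _ ≤ ENNReal.ofReal (Real.exp ε) * laplace b A' + ENNReal.ofReal δ := by
        exact add_le_add_left step2 _
    _ = ENNReal.ofReal (Real.exp ε) * posLapProb ε τ Δ v' S + ENNReal.ofReal δ := rfl


/-- With `τ := Δ + q_δ` where `q_δ = (Δ/ε)·ln(1/(2δ))` is the absolute value of the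
`δ`-quantile of `Lap(Δ/ε)`, the PositiveLaplaceMechanism is `(ε, δ)`-DP with respect to
the neighboring relation `|v − v'| ≤ Δ`. -/
theorem stmt_3 (ε δ Δ : ℝ) (hε : 0 < ε) (hδ : δ ∈ Set.Ioo (0 : ℝ) (1 / 2)) (hΔ : 0 < Δ)
    (τ : ℝ) (hτ : τ = Δ + (Δ / ε) * Real.log (1 / (2 * δ))) :
    ∀ v v' : ℝ, |v - v'| ≤ Δ → ∀ S : Set ℝ, MeasurableSet S →
      posLapProb ε τ Δ v S ≤
        ENNReal.ofReal (Real.exp ε) * posLapProb ε τ Δ v' S + ENNReal.ofReal δ ∧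
      posLapProb ε τ Δ v' S ≤
        ENNReal.ofReal (Real.exp ε) * posLapProb ε τ Δ v S + ENNReal.ofReal δ := by
  intro v v' hvv' S hS
  exact ⟨key ε δ Δ hε hδ hΔ τ hτ v v' hvv' S hS,
    key ε δ Δ hε hδ hΔ τ hτ v' v (by rwa [abs_sub_comm]) S hS⟩
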